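/- Let τ₀ > 0 and define r(t) := (cos(2πt/τ₀ − π/2), sin(2πt/τ₀ − π/2)) and R(t) := ∫₀^t r(s) ds. Then for every t ∈ [0, τ₀], Area(R)|₀^t = τ₀ (2πt − τ₀ sin(2πt/τ₀)) / (8π²), and moreover Area(R)|₀^t ≥ t³ / (2π² τ₀). -/

import Mathlib

open MeasureTheory

noncomputable section

/-- The area swept by the planar curve `R = (R₁, R₂)` on `[a, b]`:
`Area(R)|_a^b = ½ ∫_a^b (R₂' R₁ − R₁' R₂)`. -/
def sweptArea (R₁ R₂ : ℝ → ℝ) (a b : ℝ) : ℝ :=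
  (1 / 2) * ∫ s in a..b, (deriv R₂ s * R₁ s - deriv R₁ s * R₂ s)

/-- The excess swept by the planar curve `R = (R₁, R₂)` on `[0, t]`:
`Exc(R)|₀^t = Σ_{ℓ,m} ∫₀^t (∫₀^s |ξ R_ℓ'(ξ)| dξ) |R_m'(s)| ds`. -/
def excess (R₁ R₂ : ℝ → ℝ) (t : ℝ) : ℝ :=
  ∑ l : Fin 2, ∑ m : Fin 2,
    ∫ s in (0:ℝ)..t,
      (∫ ξ in (0:ℝ)..s, |ξ * deriv (![R₁, R₂] l) ξ|) * |deriv (![R₁, R₂] m) s|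

open Real in
/-- Key scalar inequality: `x³/(2π³) ≤ x − sin x` on `[0, 2π]`. -/
lemma circle_drop_key_ineq : ∀ x ∈ Set.Icc (0:ℝ) (2*π), x^3/(2*π^3) ≤ x - Real.sin x := by
  have hπ := Real.pi_gt_three
  intro x hx
  obtain ⟨hx0, hx2⟩ := hx
  rcases le_or_gt x π with h | h
  · set g : ℝ → ℝ := fun x => x - Real.sin x - x^3/(2*π^3) with hg
    have hd : ∀ y : ℝ, HasDerivAt g (1 - Real.cos y - 3*y^2/(2*π^3)) y := by
      intro y
      have h1 : HasDerivAt (fun y : ℝ => y - Real.sin y) (1 - Real.cos y) y :=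
        (hasDerivAt_id y).sub (Real.hasDerivAt_sin y)
      have h2 : HasDerivAt (fun y : ℝ => y^3/(2*π^3)) (3*y^2/(2*π^3)) y := by
        have := (hasDerivAt_pow 3 y).div_const (2*π^3)
        simpa [mul_comm] using this
      exact h1.sub h2
    have hmono : MonotoneOn g (Set.Icc 0 π) := by
      apply monotoneOn_of_deriv_nonneg (convex_Icc 0 π)
      · exact (Continuous.continuousOn (by continuity))
      · intro y hy; exact (hd y).differentiableAt.differentiableWithinAt
      · intro y hy
        rw [interior_Icc] at hy
        rw [(hd y).deriv]
        have hb : Real.cos y ≤ 1 - 2/π^2 * y^2 :=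
          Real.cos_le_one_sub_mul_cos_sq (by rw [abs_of_nonneg hy.1.le]; exact hy.2.le)
        have hy2 : 0 ≤ y^2 := sq_nonneg y
        have hπ3 : (0:ℝ) < π^3 := by positivity
        have hb' : 2*y^2/π^2 ≤ 1 - Real.cos y := by
          have : 2 / π ^ 2 * y ^ 2 = 2*y^2/π^2 := by ring
          linarith [this ▸ hb]
        have hkey : 2*y^2/π^2 * (2*π^3) = 4 * π * y^2 := by field_simp; ring
        rw [sub_nonneg, div_le_iff₀ (by positivity)]
        nlinarith [mul_le_mul_of_nonneg_right hb' (show (0:ℝ) ≤ 2*π^3 by positivity), hkey,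
          mul_nonneg (show (0:ℝ) ≤ 4*π - 3 by linarith) hy2]
    have := hmono ⟨le_refl 0, Real.pi_pos.le⟩ ⟨hx0, h⟩ hx0
    simpa [hg] using this
  · have hs : Real.sin x ≤ 0 := by
      have heq : Real.sin x = -Real.sin (x - π) := by
        rw [← Real.sin_add_pi]; ring_nf
      have hnn : 0 ≤ Real.sin (x - π) :=
        Real.sin_nonneg_of_nonneg_of_le_pi (by linarith) (by linarith)
      rw [heq]; linarith
    have hxx : x^2 ≤ 2*π^3 := by
      have h1 : x^2 ≤ (2*π)^2 := by nlinarith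
      nlinarith [sq_nonneg π]
    have : x^3/(2*π^3) ≤ x := by
      rw [div_le_iff₀ (by positivity)]
      nlinarith
    linarith

open Real in
lemma circle_drop_int_sin (ω t : ℝ) (hω : ω ≠ 0) :
    ∫ s in (0:ℝ)..t, Real.sin (ω*s) = (1 - Real.cos (ω*t))/ω := by
  have h : ∀ y ∈ Set.uIcc (0:ℝ) t,
      HasDerivAt (fun y => -Real.cos (ω*y)/ω) (Real.sin (ω*y)) y := by
    intro y _
    have h1 : HasDerivAt (fun y : ℝ => ω*y) ω y := by
      simpa using (hasDerivAt_id y).const_mul ω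
    have := ((Real.hasDerivAt_cos (ω*y)).comp y h1).neg.div_const ω
    simpa [mul_comm, mul_div_assoc, mul_div_cancel_left₀ _ hω] using this
  have := intervalIntegral.integral_eq_sub_of_hasDerivAt h
    ((Real.continuous_sin.comp (continuous_const.mul continuous_id)).intervalIntegrable 0 t)
  simp only [mul_zero, Real.cos_zero] at this
  rw [this]; ring

open Real in
lemma circle_drop_int_cos (ω t : ℝ) (hω : ω ≠ 0) :
    ∫ s in (0:ℝ)..t, Real.cos (ω*s) = Real.sin (ω*t)/ω := by
  have h : ∀ y ∈ Set.uIcc (0:ℝ) t,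
      HasDerivAt (fun y => Real.sin (ω*y)/ω) (Real.cos (ω*y)) y := by
    intro y _
    have h1 : HasDerivAt (fun y : ℝ => ω*y) ω y := by
      simpa using (hasDerivAt_id y).const_mul ω
    have := ((Real.hasDerivAt_sin (ω*y)).comp y h1).div_const ω
    simpa [mul_comm, mul_div_assoc, mul_div_cancel_left₀ _ hω] using this
  have := intervalIntegral.integral_eq_sub_of_hasDerivAt h
    ((Real.continuous_cos.comp (continuous_const.mul continuous_id)).intervalIntegrable 0 t)
  simp only [mul_zero, Real.sin_zero] at this
  rw [this]; ring

open Real in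
/-- Closed form for the first coordinate. -/
lemma circle_drop_R1 (τ₀ : ℝ) (hτ₀ : 0 < τ₀) :
    (fun t => ∫ s in (0:ℝ)..t, Real.cos (2 * Real.pi * s / τ₀ - Real.pi / 2))
      = fun t => (1 - Real.cos ((2*π/τ₀)*t))/(2*π/τ₀) := by
  have hω : (2*π/τ₀) ≠ 0 := by positivity
  funext t
  rw [← circle_drop_int_sin _ _ hω]
  apply intervalIntegral.integral_congr
  intro s _
  simp only [Real.cos_sub_pi_div_two]
  congr 1
  ring

open Real in
/-- Closed form for the second coordinate. -/
lemma circle_drop_R2 (τ₀ : ℝ) (hτ₀ : 0 < τ₀) :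
    (fun t => ∫ s in (0:ℝ)..t, Real.sin (2 * Real.pi * s / τ₀ - Real.pi / 2))
      = fun t => -(Real.sin ((2*π/τ₀)*t)/(2*π/τ₀)) := by
  have hω : (2*π/τ₀) ≠ 0 := by positivity
  funext t
  have : ∫ s in (0:ℝ)..t, Real.sin (2 * Real.pi * s / τ₀ - Real.pi / 2)
      = ∫ s in (0:ℝ)..t, -Real.cos ((2*π/τ₀)*s) := by
    apply intervalIntegral.integral_congr
    intro s _
    simp only [Real.sin_sub_pi_div_two]
    congr 2
    ring
  rw [this, intervalIntegral.integral_neg, circle_drop_int_cos _ _ hω]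

open Real in
/-- **Area swept by the circle-like drop generator.** For
`r(t) = (cos(2πt/τ₀ − π/2), sin(2πt/τ₀ − π/2))` and `R(t) = ∫₀^t r(s) ds`, one has, for
every `t ∈ [0, τ₀]`, `Area(R)|₀^t = τ₀(2πt − τ₀ sin(2πt/τ₀))/(8π²)` and
`Area(R)|₀^t ≥ t³/(2π²τ₀)`. -/
theorem circle_drop_area (τ₀ : ℝ) (hτ₀ : 0 < τ₀) :
    ∀ t ∈ Set.Icc (0:ℝ) τ₀,
      sweptArea (fun t => ∫ s in (0:ℝ)..t, Real.cos (2 * Real.pi * s / τ₀ - Real.pi / 2))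
          (fun t => ∫ s in (0:ℝ)..t, Real.sin (2 * Real.pi * s / τ₀ - Real.pi / 2)) 0 t
        = τ₀ * (2 * Real.pi * t - τ₀ * Real.sin (2 * Real.pi * t / τ₀)) / (8 * Real.pi ^ 2) ∧
      t ^ 3 / (2 * Real.pi ^ 2 * τ₀) ≤
        sweptArea (fun t => ∫ s in (0:ℝ)..t, Real.cos (2 * Real.pi * s / τ₀ - Real.pi / 2))
          (fun t => ∫ s in (0:ℝ)..t, Real.sin (2 * Real.pi * s / τ₀ - Real.pi / 2)) 0 t := by
  have hπ := Real.pi_pos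
  set ω : ℝ := 2*π/τ₀ with hωdef
  have hω : ω ≠ 0 := by positivity
  have hωpos : 0 < ω := by positivity
  intro t ht
  obtain ⟨ht0, htτ⟩ := ht
  have hR1d : ∀ s : ℝ, deriv (fun t => (1 - Real.cos (ω*t))/ω) s = Real.sin (ω*s) := by
    intro s
    have h1 : HasDerivAt (fun y : ℝ => ω*y) ω s := by
      simpa using (hasDerivAt_id s).const_mul ω
    have h2 := (((Real.hasDerivAt_cos (ω*s)).comp s h1).const_sub 1).div_const ω
    have h3 : HasDerivAt (fun t => (1 - Real.cos (ω*t))/ω) (Real.sin (ω*s)) s := by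
      simpa [mul_comm, mul_div_assoc, mul_div_cancel_left₀ _ hω] using h2
    exact h3.deriv
  have hR2d : ∀ s : ℝ, deriv (fun t => -(Real.sin (ω*t)/ω)) s = -Real.cos (ω*s) := by
    intro s
    have h1 : HasDerivAt (fun y : ℝ => ω*y) ω s := by
      simpa using (hasDerivAt_id s).const_mul ω
    have h2 := (((Real.hasDerivAt_sin (ω*s)).comp s h1).div_const ω).neg
    have h3 : HasDerivAt (fun t => -(Real.sin (ω*t)/ω)) (-Real.cos (ω*s)) s := by
      simpa [Pi.neg_def, mul_comm, mul_div_assoc, mul_div_cancel_left₀ _ hω] using h2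
    exact h3.deriv
  have harea :
      sweptArea (fun t => ∫ s in (0:ℝ)..t, Real.cos (2 * Real.pi * s / τ₀ - Real.pi / 2))
          (fun t => ∫ s in (0:ℝ)..t, Real.sin (2 * Real.pi * s / τ₀ - Real.pi / 2)) 0 t
        = τ₀ * (2 * Real.pi * t - τ₀ * Real.sin (2 * Real.pi * t / τ₀)) / (8 * Real.pi ^ 2) := by
    have hp1 : ∀ y:ℝ, (∫ s in (0:ℝ)..y, Real.cos (2 * Real.pi * s / τ₀ - Real.pi / 2))
        = (1 - Real.cos (ω*y))/ω := fun y => congrFun (circle_drop_R1 τ₀ hτ₀) y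
    have hp2 : ∀ y:ℝ, (∫ s in (0:ℝ)..y, Real.sin (2 * Real.pi * s / τ₀ - Real.pi / 2))
        = -(Real.sin (ω*y)/ω) := fun y => congrFun (circle_drop_R2 τ₀ hτ₀) y
    rw [sweptArea]
    simp only [hp1, hp2]
    have hint : ∫ s in (0:ℝ)..t,
        (deriv (fun t => -(Real.sin (ω*t)/ω)) s * ((1 - Real.cos (ω*s))/ω)
          - deriv (fun t => (1 - Real.cos (ω*t))/ω) s * (-(Real.sin (ω*s)/ω)))
        = ∫ s in (0:ℝ)..t, ((1:ℝ)/ω - Real.cos (ω*s)/ω) := by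
      apply intervalIntegral.integral_congr
      intro s _
      simp only [hR1d, hR2d]
      have hpy := Real.sin_sq_add_cos_sq (ω*s)
      field_simp
      nlinarith [hpy]
    rw [hint]
    have hInt : IntervalIntegrable (fun s => Real.cos (ω*s)/ω) volume 0 t :=
      ((Real.continuous_cos.comp (continuous_mul_left ω)).div_const ω).intervalIntegrable 0 t
    rw [intervalIntegral.integral_sub intervalIntegrable_const hInt]
    have : ∫ s in (0:ℝ)..t, Real.cos (ω*s)/ω = (∫ s in (0:ℝ)..t, Real.cos (ω*s))/ω :=
      intervalIntegral.integral_div ω _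
    rw [this, circle_drop_int_cos _ _ hω, intervalIntegral.integral_const]
    have harg : ω * t = 2 * π * t / τ₀ := by rw [hωdef]; ring
    rw [harg, hωdef]
    field_simp
    ring_nf
    rw [show π ^ 2 * τ₀ * π⁻¹ = π * τ₀ by rw [sq, mul_assoc, mul_comm, mul_assoc τ₀, inv_mul_cancel_left₀ hπ.ne', mul_comm]]
  refine ⟨harea, ?_⟩
  rw [harea]
  have hmem : 2*π*t/τ₀ ∈ Set.Icc (0:ℝ) (2*π) := by
    constructor
    · positivity
    · rw [div_le_iff₀ hτ₀]; nlinarith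
  have key := circle_drop_key_ineq _ hmem
  have h1 : t^3/(2*π^2*τ₀) = τ₀^2/(8*π^2) * ((2*π*t/τ₀)^3/(2*π^3)) := by
    field_simp; ring
  have h2 : τ₀ * (2 * π * t - τ₀ * Real.sin (2*π*t/τ₀)) / (8*π^2)
      = τ₀^2/(8*π^2) * ((2*π*t/τ₀) - Real.sin (2*π*t/τ₀)) := by
    field_simp
  rw [h1, h2]
  exact mul_le_mul_of_nonneg_left key (by positivity)

end
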